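/- Let α = (0110 1100 1010 0000) ∈ ℤ₂¹⁶ (a weight-6 codeword of RM(2,4)) and ξ = (α, α, α, αᶜ) ∈ ℤ₂⁶⁴ where αᶜ = 1¹⁶ + α. Then the coset ξ + RM(1,6) has weight enumerator 64x²⁸ + 64x³⁶; i.e., exactly 64 of its 128 elements have weight 28 and the other 64 have weight 36. -/

import Mathlib

def wt {n : ℕ} (v : Fin n → ZMod 2) : ℕ :=
  (Finset.univ.filter fun i => v i ≠ 0).card

def g1 : Fin 16 → ZMod 2 := fun _ => 1
def g2 : Fin 16 → ZMod 2 := fun i => if i.val < 8 then 1 else 0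
def g3 : Fin 16 → ZMod 2 := fun i => if i.val % 8 < 4 then 1 else 0
def g4 : Fin 16 → ZMod 2 := fun i => if i.val % 4 < 2 then 1 else 0
def g5 : Fin 16 → ZMod 2 := fun i => if i.val % 2 = 0 then 1 else 0

/-- The first-order Reed-Muller code RM(1,4) of length 16. -/
def RM14 : Submodule (ZMod 2) (Fin 16 → ZMod 2) :=
  Submodule.span (ZMod 2) {g1, g2, g3, g4, g5}

/-- Four copies of a length-16 word, concatenated. -/
def quad (a : Fin 16 → ZMod 2) : Fin 64 → ZMod 2 :=
  fun i => a ⟨i.val % 16, Nat.mod_lt _ (by norm_num)⟩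

def γ6 : Fin 64 → ZMod 2 := fun i => if i.val / 16 = 1 ∨ i.val / 16 = 3 then 1 else 0
def γ7 : Fin 64 → ZMod 2 := fun i => if 32 ≤ i.val then 1 else 0

/-- The first-order Reed-Muller code RM(1,6) of length 64. -/
def RM16 : Submodule (ZMod 2) (Fin 64 → ZMod 2) :=
  Submodule.span (ZMod 2) ({v | ∃ a ∈ RM14, v = quad a} ∪ {γ6, γ7})

/-- The dual of a binary code with respect to the standard bilinear form. -/
def dual {n : ℕ} (C : Submodule (ZMod 2) (Fin n → ZMod 2)) :
    Set (Fin n → ZMod 2) :=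
  {v | ∀ w ∈ C, ∑ i, v i * w i = 0}

/-- Concatenation of four length-16 words into a length-64 word. -/
def concat4 (a b c d : Fin 16 → ZMod 2) : Fin 64 → ZMod 2 := fun i =>
  if h : i.val < 16 then a ⟨i.val, h⟩
  else if h' : i.val < 32 then b ⟨i.val - 16, by omega⟩
  else if h'' : i.val < 48 then c ⟨i.val - 32, by omega⟩
  else d ⟨i.val - 48, by omega⟩

def α0 : Fin 16 → ZMod 2 := ![0,1,1,0, 1,1,0,0, 1,0,1,0, 0,0,0,0]

def ξ0 : Fin 64 → ZMod 2 := concat4 α0 α0 α0 ((fun _ => 1) + α0)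

/- ### Auxiliary machinery -/

def G : Fin 7 → (Fin 64 → ZMod 2) :=
  ![quad g1, quad g2, quad g3, quad g4, quad g5, γ6, γ7]

def quadL : (Fin 16 → ZMod 2) →ₗ[ZMod 2] (Fin 64 → ZMod 2) where
  toFun := quad
  map_add' := fun _ _ => rfl
  map_smul' := fun _ _ => rfl

lemma RM16_eq : RM16 = Submodule.span (ZMod 2) (Set.range G) := by
  have h1 : {v | ∃ a ∈ RM14, v = quad a} = ⇑quadL '' ↑RM14 := by
    ext v; simp [quadL, eq_comm]; rfl
  rw [RM16, h1, Submodule.span_union, Submodule.span_image, Submodule.span_eq, RM14,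
      Submodule.map_span, ← Submodule.span_union]
  congr 1
  simp only [Set.image_insert_eq, Set.image_singleton, G, Matrix.range_cons,
    Matrix.range_empty, Set.union_empty]
  ext v
  simp [Set.mem_insert_iff, quadL]
  tauto

def ff (c : Fin 7 → ZMod 2) : Fin 64 → ZMod 2 := ξ0 + ∑ i, c i • G i

lemma coset_eq : {v : Fin 64 → ZMod 2 | ∃ β ∈ RM16, v = ξ0 + β} = Set.range ff := by
  ext v
  simp only [Set.mem_setOf_eq, RM16_eq, Submodule.mem_span_range_iff_exists_fun, Set.mem_range, ff]
  constructor
  · rintro ⟨β, ⟨c, rfl⟩, rfl⟩; exact ⟨c, rfl⟩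
  · rintro ⟨c, rfl⟩; exact ⟨_, ⟨c, rfl⟩, rfl⟩

set_option maxRecDepth 100000 in
set_option maxHeartbeats 8000000 in
lemma G_indep' : ∀ d : Fin 7 → ZMod 2, (∀ j, ∑ i, d i * G i j = 0) → d = 0 := by decide

lemma ff_inj : Function.Injective ff := by
  intro c c' h
  have h2 : (∑ i, c i • G i) = ∑ i, c' i • G i := add_left_cancel h
  have h3 : ∀ j, ∑ i, (c - c') i * G i j = 0 := by
    intro j
    have hj := congrFun h2 j
    simp only [Finset.sum_apply, Pi.smul_apply, smul_eq_mul] at hj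
    simp only [Pi.sub_apply, sub_mul, Finset.sum_sub_distrib, hj, sub_self]
  exact sub_eq_zero.mp (G_indep' _ h3)

set_option maxRecDepth 100000 in
set_option maxHeartbeats 4000000 in
lemma card28 : (Finset.univ.filter fun c : Fin 7 → ZMod 2 => wt (ff c) = 28).card = 64 := by
  decide

set_option maxRecDepth 100000 in
set_option maxHeartbeats 4000000 in
lemma wt_ff : ∀ c : Fin 7 → ZMod 2, wt (ff c) = 28 ∨ wt (ff c) = 36 := by decide

lemma set_eq (k : ℕ) : {v : Fin 64 → ZMod 2 | (∃ β ∈ RM16, v = ξ0 + β) ∧ wt v = k} =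
    ff '' {c | wt (ff c) = k} := by
  have hco := Set.ext_iff.mp coset_eq
  ext v
  simp only [Set.mem_setOf_eq, Set.mem_image]
  constructor
  · rintro ⟨hv, hw⟩
    obtain ⟨c, rfl⟩ := (hco v).mp hv
    exact ⟨c, hw, rfl⟩
  · rintro ⟨c, hw, rfl⟩
    exact ⟨(hco _).mpr ⟨c, rfl⟩, hw⟩

lemma ncard_eq (k : ℕ) :
    Set.ncard {v : Fin 64 → ZMod 2 | (∃ β ∈ RM16, v = ξ0 + β) ∧ wt v = k} =
    (Finset.univ.filter fun c : Fin 7 → ZMod 2 => wt (ff c) = k).card := by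
  rw [set_eq, Set.ncard_image_of_injective _ ff_inj]
  have : {c : Fin 7 → ZMod 2 | wt (ff c) = k} =
      ↑(Finset.univ.filter fun c : Fin 7 → ZMod 2 => wt (ff c) = k) := by
    ext c; simp
  rw [this, Set.ncard_coe_finset]

lemma card36 : (Finset.univ.filter fun c : Fin 7 → ZMod 2 => wt (ff c) = 36).card = 64 := by
  have h : (Finset.univ.filter fun c : Fin 7 → ZMod 2 => wt (ff c) = 36) =
      Finset.univ.filter fun c : Fin 7 → ZMod 2 => ¬ wt (ff c) = 28 := by
    apply Finset.filter_congr
    intro c _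
    rcases wt_ff c with h | h <;> simp [h]
  rw [h, Finset.filter_not, Finset.card_sdiff_of_subset (Finset.filter_subset _ _), card28,
    Finset.card_univ]
  simp [Fintype.card_fun]

theorem stmt_13 :
    Set.ncard {v : Fin 64 → ZMod 2 | (∃ β ∈ RM16, v = ξ0 + β) ∧ wt v = 28} = 64 ∧
    Set.ncard {v : Fin 64 → ZMod 2 | (∃ β ∈ RM16, v = ξ0 + β) ∧ wt v = 36} = 64 ∧
    ∀ β ∈ RM16, wt (ξ0 + β) = 28 ∨ wt (ξ0 + β) = 36 := by
  refine ⟨by rw [ncard_eq]; exact card28, by rw [ncard_eq]; exact card36, ?_⟩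
  intro β hβ
  rw [RM16_eq, Submodule.mem_span_range_iff_exists_fun] at hβ
  obtain ⟨c, rfl⟩ := hβ
  exact wt_ff c
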